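/- arXiv:1203.1433 — 3 statements merged into one kernel-verified Lean document; each statement's English description precedes it below -/
import Mathlib

section
/- Let φ: Δ × 𝒜 → ℂ be a holomorphic function on the product of the disk Δ with a disk 𝒜 ∋ α₀, with φ(λ, α₀) ≡ 0, and suppose λ₀ ∈ Δ is a pinch, i.e. φ(λ₀, α) ≡ 0 as a function of α. Write φ(λ,α) = (λ−λ₀)^{l₀} φ₁(λ,α) with l₀ ≥ 1 maximal, so that φ₁(λ₀,·) ≢ 0. Then the image of the map Φ₁: (λ,α) ↦ (λ, φ₁(λ,α)) contains a bidisk Δ²_r(λ₀,0) of some radius r > 0 centered at (λ₀,0); consequently the union of the graphs {(λ, φ(λ,α)) : λ ∈ Δ, α ∈ 𝒜} contains Δ²_r(λ₀,0) ∩ {|z| < c|λ−λ₀|^{l₀}} for some constant c > 0. -/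
open Metric Filter Set Topology

noncomputable section

/-- **Local structure of a pinch.** Let `φ : Δ × 𝒜 → ℂ` be holomorphic on the product of
the unit disk with a parameter disk `𝒜 = ball α₀ ρ`, with `φ(·, α₀) ≡ 0`, and let
`λ₀ ∈ Δ` be a pinch, i.e. `φ(λ₀, ·) ≡ 0`. Write `φ(λ,α) = (λ - λ₀)^{l₀} φ₁(λ,α)` with
`l₀ ≥ 1` maximal, so that `φ₁(λ₀, ·) ≢ 0`. Then the image of
`Φ₁ : (λ,α) ↦ (λ, φ₁(λ,α))` contains a bidisk of some radius `r > 0` centered at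
`(λ₀, 0)`; consequently the union of the graphs `{(λ, φ(λ,α))}` contains
`Δ²_r(λ₀,0) ∩ {|z| < c |λ - λ₀|^{l₀}}` for some constant `c > 0`. -/
theorem pinch_local_structure (ρ : ℝ) (hρ : 0 < ρ) (α₀ : ℂ)
    (φ φ₁ : ℂ × ℂ → ℂ)
    (hφ : AnalyticOnNhd ℂ φ ((Metric.ball (0 : ℂ) 1) ×ˢ (Metric.ball α₀ ρ)))
    (hφ₁ : AnalyticOnNhd ℂ φ₁ ((Metric.ball (0 : ℂ) 1) ×ˢ (Metric.ball α₀ ρ)))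
    (hbase : ∀ lam ∈ Metric.ball (0 : ℂ) 1, φ (lam, α₀) = 0)
    (lam₀ : ℂ) (hlam₀ : lam₀ ∈ Metric.ball (0 : ℂ) 1)
    (hpinch : ∀ a ∈ Metric.ball α₀ ρ, φ (lam₀, a) = 0)
    (l₀ : ℕ) (hl₀ : 1 ≤ l₀)
    (hfact : ∀ p ∈ (Metric.ball (0 : ℂ) 1) ×ˢ (Metric.ball α₀ ρ),
      φ p = (p.1 - lam₀) ^ l₀ * φ₁ p)
    (hmax : ∃ a ∈ Metric.ball α₀ ρ, φ₁ (lam₀, a) ≠ 0) :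
    ∃ r > (0 : ℝ),
      (∀ p : ℂ × ℂ, ‖p.1 - lam₀‖ < r → ‖p.2‖ < r →
        ∃ lam ∈ Metric.ball (0 : ℂ) 1, ∃ a ∈ Metric.ball α₀ ρ,
          lam = p.1 ∧ φ₁ (lam, a) = p.2) ∧
      ∃ c > (0 : ℝ), ∀ p : ℂ × ℂ, ‖p.1 - lam₀‖ < r →
        ‖p.2‖ < r → ‖p.2‖ < c * ‖p.1 - lam₀‖ ^ l₀ →
        ∃ lam ∈ Metric.ball (0 : ℂ) 1, ∃ a ∈ Metric.ball α₀ ρ,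
          lam = p.1 ∧ φ (lam, a) = p.2 := by
  set D := Metric.ball (0 : ℂ) 1 with hD
  set B := Metric.ball α₀ ρ with hB
  have hα₀ : α₀ ∈ B := mem_ball_self hρ
  set g : ℂ → ℂ := fun a => φ₁ (lam₀, a) with hg
  have hgA : AnalyticOnNhd ℂ g B := by
    intro a ha
    have hpt : AnalyticAt ℂ (fun z : ℂ => (lam₀, z)) a := analyticAt_const.prod analyticAt_id
    exact (hφ₁ (lam₀, a) ⟨hlam₀, ha⟩).comp hpt
  -- Step A : φ₁ (lam, α₀) = 0 for all lam ∈ D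
  have hzero : ∀ lam ∈ D, φ₁ (lam, α₀) = 0 := by
    have hq : ∀ lam ∈ D, lam ≠ lam₀ → φ₁ (lam, α₀) = 0 := by
      intro lam hlam hne
      have h0 := hbase lam hlam
      rw [hfact (lam, α₀) ⟨hlam, hα₀⟩] at h0
      exact (mul_eq_zero.1 h0).resolve_left (pow_ne_zero _ (sub_ne_zero.2 hne))
    intro lam hlam
    rcases eq_or_ne lam lam₀ with rfl | hne
    · have hpt : AnalyticAt ℂ (fun z : ℂ => (z, α₀)) lam := analyticAt_id.prod analyticAt_const
      have hA : AnalyticAt ℂ (fun z : ℂ => φ₁ (z, α₀)) lam :=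
        AnalyticAt.comp (f := fun z : ℂ => (z, α₀)) (hφ₁ (lam, α₀) ⟨hlam, hα₀⟩) hpt
      have hc : Tendsto (fun z : ℂ => φ₁ (z, α₀)) (𝓝[≠] lam) (𝓝 (φ₁ (lam, α₀))) :=
        hA.continuousAt.continuousWithinAt
      have h0 : Tendsto (fun z : ℂ => φ₁ (z, α₀)) (𝓝[≠] lam) (𝓝 0) := by
        have hev : ∀ᶠ z in 𝓝[≠] lam, φ₁ (z, α₀) = 0 := by
          have hDop : D ∈ 𝓝 lam := isOpen_ball.mem_nhds hlam
          filter_upwards [nhdsWithin_le_nhds hDop, self_mem_nhdsWithin] with z hz hz'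
          exact hq z hz hz'
        exact Tendsto.congr' (hev.mono fun z hz => hz.symm) tendsto_const_nhds
      exact tendsto_nhds_unique hc h0
    · exact hq lam hlam hne
  -- Step B : zeros of g near α₀ are isolated (g is not identically zero)
  obtain ⟨a₁, ha₁, ha₁ne⟩ := hmax
  have hiso : ∀ᶠ z in 𝓝[≠] α₀, g z ≠ 0 := by
    rcases (hgA α₀ hα₀).eventually_eq_zero_or_eventually_ne_zero with h | h
    · exact absurd (hgA.eqOn_zero_of_preconnected_of_eventuallyEq_zero
        (convex_ball α₀ ρ).isPreconnected hα₀ h ha₁) ha₁ne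
    · exact h
  rw [eventually_nhdsWithin_iff, Metric.eventually_nhds_iff] at hiso
  obtain ⟨ε, hε, hεg⟩ := hiso
  set s : ℝ := min (ε / 2) (ρ / 2) with hs
  have hs0 : 0 < s := lt_min (half_pos hε) (half_pos hρ)
  have hsρ : s < ρ := (min_le_right _ _).trans_lt (half_lt_self hρ)
  have hsub : closedBall α₀ s ⊆ B := closedBall_subset_ball hsρ
  have hsphere_ne : ∀ z ∈ sphere α₀ s, g z ≠ 0 := by
    intro z hz
    have hd : dist z α₀ = s := hz
    have hzne : z ≠ α₀ := by
      intro h; rw [h, dist_self] at hd; exact hs0.ne hd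
    exact hεg (hd.trans_lt ((min_le_left _ _).trans_lt (half_lt_self hε))) hzne
  -- the minimum m of ‖g‖ on the sphere
  have hcsph : IsCompact (sphere α₀ s) := isCompact_sphere α₀ s
  have hgcont : ContinuousOn g (sphere α₀ s) := fun z hz =>
    ((hgA z (hsub (sphere_subset_closedBall hz))).continuousAt).continuousWithinAt
  have hgc : ContinuousOn (fun z => ‖g z‖) (sphere α₀ s) := hgcont.norm
  obtain ⟨amin, haminS, hamin⟩ :=
    hcsph.exists_isMinOn (NormedSpace.sphere_nonempty.2 hs0.le) hgc
  set m : ℝ := ‖g amin‖ with hm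
  have hm0 : 0 < m := norm_pos_iff.2 (hsphere_ne amin haminS)
  have hmle : ∀ z ∈ sphere α₀ s, m ≤ ‖g z‖ := fun z hz => hamin hz
  -- uniform continuity on a compact product
  have hlam₀1 : ‖lam₀‖ < 1 := by
    have h := hlam₀
    rw [hD, mem_ball, dist_zero_right] at h
    exact h
  set t : ℝ := (1 - ‖lam₀‖) / 2 with ht
  have ht0 : 0 < t := by rw [ht]; linarith
  have hKD : closedBall lam₀ t ⊆ D := by
    intro z hz
    simp only [mem_closedBall, dist_eq_norm] at hz
    simp only [hD, mem_ball, dist_zero_right]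
    calc ‖z‖ = ‖(z - lam₀) + lam₀‖ := by ring_nf
    _ ≤ ‖z - lam₀‖ + ‖lam₀‖ := norm_add_le _ _
    _ < 1 := by rw [ht] at hz; linarith
  set K : Set (ℂ × ℂ) := closedBall lam₀ t ×ˢ sphere α₀ s with hK
  have hKc : IsCompact K := (isCompact_closedBall _ _).prod hcsph
  have hKsub : K ⊆ D ×ˢ B := prod_mono hKD fun z hz => hsub (sphere_subset_closedBall hz)
  have hφ₁K : ContinuousOn φ₁ K := fun p hp =>
    ((hφ₁ p (hKsub hp)).continuousAt).continuousWithinAt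
  obtain ⟨δ, hδ0, hδ⟩ := Metric.uniformContinuousOn_iff.1
    (hKc.uniformContinuousOn_of_continuous hφ₁K) (m / 4) (by positivity)
  -- the radius
  set r : ℝ := min (min t δ) (m / 4) with hr
  have hr0 : 0 < r := lt_min (lt_min ht0 hδ0) (by positivity)
  have hrt : r ≤ t := (min_le_left _ _).trans (min_le_left _ _)
  have hrδ : r ≤ δ := (min_le_left _ _).trans (min_le_right _ _)
  have hrm : r ≤ m / 4 := min_le_right _ _
  -- main claim : the image of Φ₁ contains the bidisk of radius r
  have main : ∀ p : ℂ × ℂ, ‖p.1 - lam₀‖ < r → ‖p.2‖ < r →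
      ∃ lam ∈ D, ∃ a ∈ B, lam = p.1 ∧ φ₁ (lam, a) = p.2 := by
    rintro ⟨lam, w⟩ h1 h2
    have hlamcb : lam ∈ closedBall lam₀ t := by
      simp only [mem_closedBall, dist_eq_norm]; linarith [h1.trans_le hrt]
    have hlamD : lam ∈ D := hKD hlamcb
    have hnear : ∀ z ∈ sphere α₀ s, ‖φ₁ (lam, z) - g z‖ < m / 4 := by
      intro z hz
      have hp1 : (lam, z) ∈ K := ⟨hlamcb, hz⟩
      have hp2 : (lam₀, z) ∈ K := ⟨mem_closedBall_self ht0.le, hz⟩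
      have hdist : dist (lam, z) (lam₀, z) < δ := by
        rw [Prod.dist_eq]
        simp only [dist_self, dist_eq_norm]
        rw [max_eq_left (norm_nonneg _)]
        exact h1.trans_le hrδ
      have := hδ _ hp1 _ hp2 hdist
      rwa [dist_eq_norm] at this
    by_contra hcon
    push_neg at hcon
    have hne : ∀ z ∈ closedBall α₀ s, φ₁ (lam, z) - w ≠ 0 := by
      intro z hz hzr
      exact hcon lam hlamD z (hsub hz) rfl (sub_eq_zero.1 hzr)
    set h : ℂ → ℂ := fun z => (φ₁ (lam, z) - w)⁻¹ with hh
    have hdiffφ : DifferentiableOn ℂ (fun z => φ₁ (lam, z) - w) (closedBall α₀ s) := by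
      intro z hz
      have hpt : AnalyticAt ℂ (fun y : ℂ => (lam, y)) z := analyticAt_const.prod analyticAt_id
      have : AnalyticAt ℂ (fun y : ℂ => φ₁ (lam, y)) z :=
        (hφ₁ (lam, z) ⟨hlamD, hsub hz⟩).comp hpt
      exact (this.differentiableAt.sub (differentiableAt_const _)).differentiableWithinAt
    have hdiff : DifferentiableOn ℂ h (closedBall α₀ s) := hdiffφ.inv hne
    have hdc : DiffContOnCl ℂ h (ball α₀ s) := by
      rw [← closure_ball α₀ hs0.ne'] at hdiff
      exact hdiff.diffContOnCl
    have hbd : ∀ z ∈ frontier (ball α₀ s), ‖h z‖ ≤ (m / 2)⁻¹ := by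
      rw [frontier_ball α₀ hs0.ne']
      intro z hz
      have h1' : m ≤ ‖g z‖ := hmle z hz
      have h2' : ‖φ₁ (lam, z) - g z‖ < m / 4 := hnear z hz
      have h3' : ‖w‖ < m / 4 := h2.trans_le hrm
      have hlow : m / 2 ≤ ‖φ₁ (lam, z) - w‖ := by
        have e : g z = (φ₁ (lam, z) - w) - (φ₁ (lam, z) - g z) + w := by ring
        have e1 : ‖g z‖ ≤ ‖(φ₁ (lam, z) - w) - (φ₁ (lam, z) - g z)‖ + ‖w‖ := by
          conv_lhs => rw [e]
          exact norm_add_le _ _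
        have e2 : ‖(φ₁ (lam, z) - w) - (φ₁ (lam, z) - g z)‖ ≤
            ‖φ₁ (lam, z) - w‖ + ‖φ₁ (lam, z) - g z‖ := norm_sub_le _ _
        linarith
      rw [hh, norm_inv]
      exact inv_anti₀ (by positivity) hlow
    have hα₀cl : α₀ ∈ closure (ball α₀ s) := by
      rw [closure_ball α₀ hs0.ne']; exact mem_closedBall_self hs0.le
    have hmaxmod := Complex.norm_le_of_forall_mem_frontier_norm_le
      isBounded_ball hdc hbd hα₀cl
    have hα₀v : h α₀ = (-w)⁻¹ := by rw [hh]; simp [hzero lam hlamD]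
    rw [hα₀v, norm_inv, norm_neg] at hmaxmod
    have hw0 : w ≠ 0 := by
      intro hw
      exact hne α₀ (mem_closedBall_self hs0.le) (by simp [hzero lam hlamD, hw])
    have hw0' : 0 < ‖w‖ := norm_pos_iff.2 hw0
    have h3' : ‖w‖ < m / 4 := h2.trans_le hrm
    have hlt : (m / 2)⁻¹ < ‖w‖⁻¹ := inv_strictAnti₀ hw0' (by linarith)
    linarith
  refine ⟨r, hr0, main, r, hr0, ?_⟩
  rintro ⟨lam, w⟩ h1 h2 h3
  simp only at h1 h2 h3 ⊢
  have hlamne : lam ≠ lam₀ := by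
    intro hE
    rw [hE, sub_self] at h3
    rw [norm_zero, zero_pow (by omega : l₀ ≠ 0), mul_zero] at h3
    exact (norm_nonneg w).not_gt h3
  have hpow0 : (lam - lam₀) ^ l₀ ≠ 0 := pow_ne_zero _ (sub_ne_zero.2 hlamne)
  have habspow : 0 < ‖lam - lam₀‖ ^ l₀ := by
    have := norm_pos_iff.2 (sub_ne_zero.2 hlamne); positivity
  set w' : ℂ := w / (lam - lam₀) ^ l₀ with hw'
  have hw'lt : ‖w'‖ < r := by
    rw [hw', norm_div, norm_pow, div_lt_iff₀ habspow]
    linarith [h3]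
  obtain ⟨lam', hlam', a, ha, hlameq, hval⟩ := main (lam, w') h1 hw'lt
  refine ⟨lam', hlam', a, ha, hlameq, ?_⟩
  rw [hfact (lam', a) ⟨hlam', ha⟩]
  simp only at hval
  rw [hval, hlameq, hw', mul_comm, div_mul_cancel₀ _ hpow0]

end
end

section
/- The series f(λ,z) = Σ_{n=1}^∞ 3^{−4n³} · ∏_{j=1}^n [z − (2λ/3)^j] · λ^{−n²} z^n converges normally on compact subsets of ℂ* × ℂ, and hence defines a holomorphic function f on the ring domain ℂ* × ℂ. Moreover, for every integer l ≥ 2, substituting z = φ_l(λ) = (2/3)^l λ^l makes the series a finite sum of polynomials; in particular f extends holomorphically along every curve C_l = {z = (2λ/3)^l}. -/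
open Metric Filter Set

noncomputable section

/-- The `n`-th term `3^{-4n³} ∏_{j=1}^n [z - (2λ/3)^j] λ^{-n²} z^n` of the series
defining the function of Example 1. -/
def trm (n : ℕ) (p : ℂ × ℂ) : ℂ :=
  (3 : ℂ) ^ (-(4 * (n : ℤ) ^ 3)) * (∏ j ∈ Finset.Icc 1 n, (p.2 - (2 * p.1 / 3) ^ j)) *
    p.1 ^ (-((n : ℤ) ^ 2)) * p.2 ^ n

/-- The function `f(λ,z) = Σ_{n≥1} 3^{-4n³} ∏_{j=1}^n [z - (2λ/3)^j] λ^{-n²} z^n` of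
Example 1. -/
def fEx (p : ℂ × ℂ) : ℂ := ∑' n : ℕ, trm (n + 1) p

lemma trm_bound {C : ℝ} (hC : 2 ≤ C) {n : ℕ} (hn : 1 ≤ n) (p : ℂ × ℂ)
    (h1 : ‖p.1‖⁻¹ ≤ C) (h2 : ‖p.1‖ ≤ C) (h3 : ‖p.2‖ ≤ C) :
    ‖trm n p‖ ≤ C ^ (4 * n ^ 2) / 3 ^ (4 * n ^ 3) := by
  have hC1 : (1 : ℝ) ≤ C := by linarith
  have hC0 : (0 : ℝ) ≤ C := by linarith
  have hnorm1 : ‖(3 : ℂ) ^ (-(4 * (n : ℤ) ^ 3))‖ = ((3 : ℝ) ^ (4 * n ^ 3))⁻¹ := by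
    rw [norm_zpow]
    rw [show (-(4 * (n : ℤ) ^ 3)) = -((4 * n ^ 3 : ℕ) : ℤ) by push_cast; ring]
    rw [zpow_neg, zpow_natCast]
    norm_num
  have hnorm3 : ‖p.1 ^ (-((n : ℤ) ^ 2))‖ ≤ C ^ (n ^ 2) := by
    rw [norm_zpow, show (-((n : ℤ) ^ 2)) = -((n ^ 2 : ℕ) : ℤ) by push_cast; ring,
      zpow_neg, zpow_natCast, ← inv_pow]
    exact pow_le_pow_left₀ (inv_nonneg.2 (norm_nonneg _)) h1 _
  have hnorm2 : ‖∏ j ∈ Finset.Icc 1 n, (p.2 - (2 * p.1 / 3) ^ j)‖ ≤ C ^ (2 * n ^ 2) := by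
    rw [norm_prod]
    calc ∏ j ∈ Finset.Icc 1 n, ‖p.2 - (2 * p.1 / 3) ^ j‖
        ≤ ∏ j ∈ Finset.Icc 1 n, C ^ (j + 1) := by
          refine Finset.prod_le_prod (fun j _ => norm_nonneg _) (fun j hj => ?_)
          have hj1 : 1 ≤ j := (Finset.mem_Icc.1 hj).1
          have hb : ‖(2 * p.1 / 3 : ℂ) ^ j‖ ≤ C ^ j := by
            rw [norm_pow]
            refine pow_le_pow_left₀ (norm_nonneg _) ?_ _
            have : ‖(2 * p.1 / 3 : ℂ)‖ = 2 * ‖p.1‖ / 3 := by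
              simp [norm_div, norm_mul]
            rw [this]; linarith
          calc ‖p.2 - (2 * p.1 / 3) ^ j‖ ≤ ‖p.2‖ + ‖(2 * p.1 / 3 : ℂ) ^ j‖ := norm_sub_le _ _
            _ ≤ C + C ^ j := add_le_add h3 hb
            _ ≤ C ^ j + C ^ j := by
                have := pow_le_pow_right₀ hC1 hj1
                simpa using add_le_add_right this (C ^ j)
            _ ≤ C ^ (j + 1) := by
                rw [pow_succ]
                nlinarith [pow_nonneg hC0 j]
      _ = C ^ (∑ j ∈ Finset.Icc 1 n, (j + 1)) := Finset.prod_pow_eq_pow_sum _ _ _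
      _ ≤ C ^ (2 * n ^ 2) := by
          refine pow_le_pow_right₀ hC1 ?_
          calc ∑ j ∈ Finset.Icc 1 n, (j + 1) ≤ ∑ _j ∈ Finset.Icc 1 n, 2 * n := by
                refine Finset.sum_le_sum fun j hj => ?_
                have := (Finset.mem_Icc.1 hj).2
                omega
            _ ≤ 2 * n ^ 2 := by
                rw [Finset.sum_const, Nat.card_Icc, smul_eq_mul]
                have h : n + 1 - 1 = n := by omega
                rw [h]; nlinarith
  have hnorm4 : ‖p.2 ^ n‖ ≤ C ^ n := by
    rw [norm_pow]; exact pow_le_pow_left₀ (norm_nonneg _) h3 _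
  have key : ‖trm n p‖ ≤ ((3 : ℝ) ^ (4 * n ^ 3))⁻¹ * (C ^ (2 * n ^ 2) * C ^ (n ^ 2) * C ^ n) := by
    unfold trm
    rw [norm_mul, norm_mul, norm_mul, hnorm1]
    have h3pos : (0:ℝ) < ((3 : ℝ) ^ (4 * n ^ 3))⁻¹ := by positivity
    calc ((3 : ℝ) ^ (4 * n ^ 3))⁻¹ * ‖∏ j ∈ Finset.Icc 1 n, (p.2 - (2 * p.1 / 3) ^ j)‖ *
          ‖p.1 ^ (-((n : ℤ) ^ 2))‖ * ‖p.2 ^ n‖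
        ≤ ((3 : ℝ) ^ (4 * n ^ 3))⁻¹ * C ^ (2 * n ^ 2) * C ^ (n ^ 2) * C ^ n := by
          have h3pos : (0:ℝ) ≤ ((3 : ℝ) ^ (4 * n ^ 3))⁻¹ := by positivity
          gcongr <;> first | exact hnorm2 | exact hnorm3 | exact hnorm4
      _ = ((3 : ℝ) ^ (4 * n ^ 3))⁻¹ * (C ^ (2 * n ^ 2) * C ^ (n ^ 2) * C ^ n) := by ring
  refine key.trans ?_
  rw [div_eq_mul_inv, mul_comm (C ^ (4 * n ^ 2))]
  gcongr ?_ * ?_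
  · calc C ^ (2 * n ^ 2) * C ^ (n ^ 2) * C ^ n = C ^ (2 * n ^ 2 + n ^ 2 + n) := by ring
      _ ≤ C ^ (4 * n ^ 2) := pow_le_pow_right₀ hC1 (by nlinarith)

lemma summable_aux {C : ℝ} (hC : 2 ≤ C) :
    Summable (fun n : ℕ => C ^ (4 * (n + 1) ^ 2) / 3 ^ (4 * (n + 1) ^ 3)) := by
  have hC0 : (0:ℝ) < C := by linarith
  obtain ⟨N, hN⟩ : ∃ N : ℕ, 2 * C < 3 ^ N := pow_unbounded_of_one_lt (2 * C) (by norm_num)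
  refine summable_of_isBigO_nat (summable_geometric_of_lt_one (by norm_num) (by norm_num :
    (1:ℝ)/2 < 1)) (Asymptotics.IsBigO.of_bound 1 ?_)
  filter_upwards [eventually_ge_atTop N] with n hn
  rw [one_mul, Real.norm_eq_abs, Real.norm_eq_abs]
  have h3 : (2 * C) ≤ 3 ^ (n + 1) := by
    refine hN.le.trans (pow_le_pow_right₀ (by norm_num) (by omega))
  have hE : n ≤ 4 * (n + 1) ^ 2 := by nlinarith
  have key : C ^ (4 * (n + 1) ^ 2) / 3 ^ (4 * (n + 1) ^ 3) ≤ (1/2) ^ n := by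
    have h1 : ((3:ℝ)) ^ (4 * (n + 1) ^ 3) = ((3:ℝ) ^ (n+1)) ^ (4 * (n + 1) ^ 2) := by
      rw [← pow_mul]; ring_nf
    rw [h1, div_le_iff₀ (by positivity), one_div, inv_pow, inv_mul_eq_div,
      le_div_iff₀ (by positivity)]
    calc C ^ (4 * (n + 1) ^ 2) * 2 ^ n ≤ C ^ (4 * (n + 1) ^ 2) * 2 ^ (4 * (n+1)^2) := by
          gcongr <;> norm_num
        _ = (2 * C) ^ (4 * (n+1)^2) := by rw [mul_pow]; ring
        _ ≤ ((3:ℝ) ^ (n+1)) ^ (4 * (n + 1) ^ 2) := by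
          gcongr <;> linarith
  rw [abs_of_nonneg (by positivity), abs_of_nonneg (by positivity)]
  exact key

lemma compact_bound (K : Set (ℂ × ℂ)) (hK : IsCompact K) (hK1 : K ⊆ {p : ℂ × ℂ | p.1 ≠ 0}) :
    ∃ C : ℝ, 2 ≤ C ∧ ∀ p ∈ K, ‖p.1‖⁻¹ ≤ C ∧ ‖p.1‖ ≤ C ∧ ‖p.2‖ ≤ C := by
  rcases K.eq_empty_or_nonempty with rfl | hne
  · exact ⟨2, le_rfl, by simp⟩
  obtain ⟨q, hqK, hq⟩ := hK.exists_isMinOn hne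
    ((continuous_norm.comp continuous_fst).continuousOn)
  have hq0 : 0 < ‖q.1‖ := norm_pos_iff.2 (hK1 hqK)
  obtain ⟨R, hR⟩ := hK.isBounded.subset_closedBall 0
  refine ⟨max 2 (max ‖q.1‖⁻¹ R), le_max_left _ _, fun p hp => ?_⟩
  have h1 : ‖p.1‖⁻¹ ≤ ‖q.1‖⁻¹ := by
    have := hq hp
    simp only [IsMinOn, IsMinFilter] at this
    exact inv_anti₀ hq0 (hq hp)
  have h2 : ‖p‖ ≤ R := by simpa using hR hp
  refine ⟨h1.trans ((le_max_left _ _).trans (le_max_right _ _)),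
    ((norm_fst_le p).trans h2).trans ((le_max_right _ _).trans (le_max_right _ _)),
    ((norm_snd_le p).trans h2).trans ((le_max_right _ _).trans (le_max_right _ _))⟩

lemma part1 (K : Set (ℂ × ℂ)) (hK : IsCompact K) (hK1 : K ⊆ {p : ℂ × ℂ | p.1 ≠ 0}) :
    ∃ u : ℕ → ℝ, Summable u ∧ ∀ n : ℕ, ∀ p ∈ K, ‖trm (n + 1) p‖ ≤ u n := by
  obtain ⟨C, hC, hCp⟩ := compact_bound K hK hK1
  refine ⟨fun n => C ^ (4 * (n + 1) ^ 2) / 3 ^ (4 * (n + 1) ^ 3), summable_aux hC,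
    fun n p hp => ?_⟩
  obtain ⟨h1, h2, h3⟩ := hCp p hp
  exact trm_bound hC (by omega) p h1 h2 h3

lemma trm_diffAt (n : ℕ) {p : ℂ × ℂ} (hp : p.1 ≠ 0) : DifferentiableAt ℂ (trm n) p := by
  classical
  have hprod : DifferentiableAt ℂ
      (fun q : ℂ × ℂ => ∏ j ∈ Finset.Icc 1 n, (q.2 - (2 * q.1 / 3) ^ j)) p := by
    have := HasFDerivAt.finset_prod (u := Finset.Icc 1 n)
      (g := fun (j : ℕ) (q : ℂ × ℂ) => q.2 - (2 * q.1 / 3) ^ j)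
      (g' := fun j => fderiv ℂ (fun q : ℂ × ℂ => q.2 - (2 * q.1 / 3) ^ j) p)
      (x := p) (fun j _ => ?_)
    · exact this.differentiableAt
    · refine DifferentiableAt.hasFDerivAt ?_
      fun_prop
  have hz : DifferentiableAt ℂ (fun q : ℂ × ℂ => q.1 ^ (-((n : ℤ) ^ 2))) p :=
    differentiableAt_fst.zpow (Or.inl hp)
  exact ((((differentiableAt_const _).mul hprod).mul hz).mul (differentiableAt_snd.pow n))


lemma fEx_diffAt {p₀ : ℂ × ℂ} (hp : p₀.1 ≠ 0) : DifferentiableAt ℂ fEx p₀ := by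
  set r : ℝ := ‖p₀.1‖ / 4 with hrdef
  have hp0 : 0 < ‖p₀.1‖ := norm_pos_iff.2 hp
  have hr0 : 0 < r := by positivity
  have hKsub : closedBall p₀ (3 * r) ⊆ {p : ℂ × ℂ | p.1 ≠ 0} := by
    intro q hq
    have h1 : ‖q.1 - p₀.1‖ ≤ 3 * r := by
      have : ‖(q - p₀).1‖ ≤ ‖q - p₀‖ := norm_fst_le _
      simpa [dist_eq_norm] using this.trans (mem_closedBall_iff_norm.1 hq)
    have : ‖p₀.1‖ - ‖q.1‖ ≤ 3 * r := by
      have := norm_sub_norm_le p₀.1 q.1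
      rw [norm_sub_rev] at h1
      linarith
    have hq1 : r ≤ ‖q.1‖ := by rw [hrdef] at *; linarith
    exact norm_pos_iff.1 (lt_of_lt_of_le hr0 hq1)
  obtain ⟨u, hu, hub⟩ := part1 _ (isCompact_closedBall p₀ (3 * r)) hKsub
  have hball_sub : ball p₀ r ⊆ closedBall p₀ (3 * r) :=
    (ball_subset_closedBall).trans (closedBall_subset_closedBall (by linarith))
  have hq1ne : ∀ q ∈ ball p₀ r, q.1 ≠ 0 := fun q hq => hKsub (hball_sub hq)
  have hu0 : ∀ n, 0 ≤ u n := fun n =>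
    (norm_nonneg _).trans (hub n p₀ (mem_closedBall_self (by positivity)))
  -- derivative bound
  have hfd : ∀ (n : ℕ) (q : ℂ × ℂ), q ∈ ball p₀ r →
      ‖fderiv ℂ (trm (n + 1)) q‖ ≤ u n / (2 * r) := by
    intro n q hq
    have hqne := hq1ne q hq
    have hkey : ∀ w : ℂ × ℂ, ‖w‖ = 1 →
        ‖(fderiv ℂ (trm (n + 1)) q) w‖ ≤ u n / (2 * r) := by
      intro w hw
      set g : ℂ → ℂ := fun t => trm (n + 1) (q + t • w) with hgdef
      have hmem : ∀ t : ℂ, t ∈ closedBall (0 : ℂ) (2 * r) →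
          q + t • w ∈ closedBall p₀ (3 * r) := by
        intro t ht
        rw [mem_closedBall_iff_norm]
        have h1 : ‖q - p₀‖ < r := mem_ball_iff_norm.1 hq
        have h2 : ‖t‖ ≤ 2 * r := by simpa using mem_closedBall_iff_norm.1 ht
        calc ‖q + t • w - p₀‖ = ‖(q - p₀) + t • w‖ := by ring_nf
          _ ≤ ‖q - p₀‖ + ‖t • w‖ := norm_add_le _ _
          _ ≤ r + 2 * r := by
              rw [norm_smul, hw, mul_one]
              exact add_le_add h1.le h2
          _ = 3 * r := by ring
      have hdiffAt : ∀ t : ℂ, t ∈ closedBall (0 : ℂ) (2 * r) → DifferentiableAt ℂ g t := by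
        intro t ht
        have h1 : (q + t • w).1 ≠ 0 := hKsub (hmem t ht)
        exact (trm_diffAt (n + 1) h1).comp t
          ((differentiableAt_id.smul_const w).const_add q)
      have hdcc : DiffContOnCl ℂ g (ball (0 : ℂ) (2 * r)) := by
        constructor
        · exact fun t ht =>
            (hdiffAt t (ball_subset_closedBall ht)).differentiableWithinAt
        · rw [closure_ball (0 : ℂ) (by positivity : (2:ℝ) * r ≠ 0)]
          exact fun t ht => (hdiffAt t ht).continuousAt.continuousWithinAt
      have hsph : ∀ t ∈ sphere (0 : ℂ) (2 * r), ‖g t‖ ≤ u n := fun t ht =>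
        hub n _ (hmem t (sphere_subset_closedBall ht))
      have hd0 : ‖deriv g 0‖ ≤ u n / (2 * r) :=
        Complex.norm_deriv_le_of_forall_mem_sphere_norm_le (by positivity) hdcc hsph
      have hqeq : q + (0 : ℂ) • w = q := by simp
      have hF : HasFDerivAt (trm (n + 1)) (fderiv ℂ (trm (n + 1)) q) (q + (0 : ℂ) • w) := by
        rw [hqeq]; exact (trm_diffAt (n + 1) hqne).hasFDerivAt
      have hin : HasDerivAt (fun t : ℂ => q + t • w) w 0 := by
        simpa using ((hasDerivAt_id (0 : ℂ)).smul_const w).const_add q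
      have hg0 : HasDerivAt g ((fderiv ℂ (trm (n + 1)) q) w) 0 :=
        HasFDerivAt.comp_hasDerivAt (f := fun t : ℂ => q + t • w) 0 hF hin
      rw [← hg0.deriv]
      exact hd0
    refine ContinuousLinearMap.opNorm_le_bound _
      (div_nonneg (hu0 n) (by positivity)) fun v => ?_
    rcases eq_or_ne v 0 with rfl | hv
    · simp
    · have hvn : (‖v‖ : ℂ) ≠ 0 := by
        simpa using norm_ne_zero_iff.2 hv
      set w : ℂ × ℂ := (‖v‖ : ℂ)⁻¹ • v with hwdef
      have hw : ‖w‖ = 1 := by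
        rw [hwdef, norm_smul, norm_inv, Complex.norm_real, Real.norm_eq_abs,
          abs_of_nonneg (norm_nonneg v)]
        exact inv_mul_cancel₀ (norm_ne_zero_iff.2 hv)

      have hvw : (‖v‖ : ℂ) • w = v := by
        rw [hwdef, smul_smul, mul_inv_cancel₀ hvn, one_smul]
      calc ‖(fderiv ℂ (trm (n + 1)) q) v‖ = ‖(fderiv ℂ (trm (n + 1)) q) ((‖v‖ : ℂ) • w)‖ := by
            rw [hvw]
        _ = ‖v‖ * ‖(fderiv ℂ (trm (n + 1)) q) w‖ := by
            rw [map_smul, norm_smul, Complex.norm_real, Real.norm_eq_abs,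
              abs_of_nonneg (norm_nonneg v)]
        _ ≤ ‖v‖ * (u n / (2 * r)) := by
            exact mul_le_mul_of_nonneg_left (hkey w hw) (norm_nonneg v)
        _ = u n / (2 * r) * ‖v‖ := by ring
  have hu' : Summable fun n => u n / (2 * r) := hu.div_const _
  have hf : ∀ (n : ℕ) (q : ℂ × ℂ), q ∈ ball p₀ r →
      HasFDerivAt (trm (n + 1)) (fderiv ℂ (trm (n + 1)) q) q := fun n q hq =>
    (trm_diffAt (n + 1) (hq1ne q hq)).hasFDerivAt
  have hf0 : Summable fun n => trm (n + 1) p₀ :=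
    Summable.of_norm_bounded hu fun n =>
      hub n p₀ (mem_closedBall_self (by positivity))
  have hmem₀ : p₀ ∈ ball p₀ r := mem_ball_self hr0
  have := hasFDerivAt_tsum_of_isPreconnected hu' isOpen_ball
    (convex_ball p₀ r).isPreconnected hf hfd hmem₀ hf0 hmem₀
  exact this.differentiableAt

lemma trm_zero_of_ge {l n : ℕ} (hl : 1 ≤ l) (hn : l ≤ n) (lam : ℂ) :
    trm n (lam, (2 * lam / 3) ^ l) = 0 := by
  unfold trm
  have h : (∏ j ∈ Finset.Icc 1 n, ((lam, (2 * lam / 3) ^ l).2 - (2 * (lam, (2 * lam / 3) ^ l).1 / 3) ^ j)) = 0 :=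
    Finset.prod_eq_zero (Finset.mem_Icc.2 ⟨hl, hn⟩) (by simp)
  rw [h]
  ring

lemma finite_sum {l : ℕ} (hl : 2 ≤ l) (lam : ℂ) :
    fEx (lam, (2 * lam / 3) ^ l) =
      ∑ n ∈ Finset.Icc 1 (l - 1), trm n (lam, (2 * lam / 3) ^ l) := by
  unfold fEx
  rw [tsum_eq_sum (s := Finset.range (l - 1))
    (fun n hn => trm_zero_of_ge (by omega) (by simp [Finset.mem_range] at hn; omega) lam)]
  rw [show Finset.Icc 1 (l-1) = Finset.Ico 1 l by rw [← Finset.Ico_add_one_right_eq_Icc]; congr 1; omega,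
    Finset.sum_Ico_eq_sum_range]
  refine Finset.sum_congr (by congr 1) fun i _ => ?_
  congr 1
  omega

lemma trm_poly {l n : ℕ} (hn1 : 1 ≤ n) (hnl : n ≤ l - 1) (hl : 2 ≤ l) {lam : ℂ}
    (hlam : lam ≠ 0) :
    trm n (lam, (2 * lam / 3) ^ l) =
      Polynomial.eval lam
        (Polynomial.C ((3:ℂ) ^ (-(4 * (n:ℤ) ^ 3)) *
            (2/3) ^ ((∑ j ∈ Finset.Icc 1 n, j) + l * n)) *
          Polynomial.X ^ (((∑ j ∈ Finset.Icc 1 n, j) + l * n) - n ^ 2) *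
          ∏ j ∈ Finset.Icc 1 n,
            (Polynomial.C ((2/3 : ℂ) ^ (l - j)) * Polynomial.X ^ (l - j) - 1)) := by
  set E : ℕ := (∑ j ∈ Finset.Icc 1 n, j) + l * n with hE
  have hnle : n ≤ l := by omega
  have hn2E : n ^ 2 ≤ E := by
    have : n ^ 2 ≤ l * n := by nlinarith
    omega
  set c : ℂ := 2 * lam / 3 with hc
  have hprod : (∏ j ∈ Finset.Icc 1 n, (c ^ l - c ^ j)) =
      c ^ (∑ j ∈ Finset.Icc 1 n, j) * ∏ j ∈ Finset.Icc 1 n, (c ^ (l - j) - 1) := by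
    rw [← Finset.prod_pow_eq_pow_sum, ← Finset.prod_mul_distrib]
    refine Finset.prod_congr rfl fun j hj => ?_
    have hjl : j ≤ l := le_trans (Finset.mem_Icc.1 hj).2 hnle
    rw [mul_sub, mul_one, ← pow_add, Nat.add_sub_cancel' hjl]
  have hcl : c = (2/3 : ℂ) * lam := by rw [hc]; ring
  have hlampow : lam ^ E * lam ^ (-((n:ℤ) ^ 2)) = lam ^ (E - n ^ 2) := by
    rw [← zpow_natCast lam E, ← zpow_natCast lam (E - n ^ 2), ← zpow_add₀ hlam]
    congr 1
    push_cast [hn2E]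
    ring
  have heval : Polynomial.eval lam
        (Polynomial.C ((3:ℂ) ^ (-(4 * (n:ℤ) ^ 3)) * (2/3) ^ E) *
          Polynomial.X ^ (E - n ^ 2) *
          ∏ j ∈ Finset.Icc 1 n,
            (Polynomial.C ((2/3 : ℂ) ^ (l - j)) * Polynomial.X ^ (l - j) - 1)) =
      (3:ℂ) ^ (-(4 * (n:ℤ) ^ 3)) * (2/3) ^ E * lam ^ (E - n ^ 2) *
        ∏ j ∈ Finset.Icc 1 n, (c ^ (l - j) - 1) := by
    rw [Polynomial.eval_mul, Polynomial.eval_mul, Polynomial.eval_C, Polynomial.eval_pow,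
      Polynomial.eval_X, Polynomial.eval_prod]
    congr 1
    refine Finset.prod_congr rfl fun j hj => ?_
    rw [Polynomial.eval_sub, Polynomial.eval_mul, Polynomial.eval_C, Polynomial.eval_pow,
      Polynomial.eval_X, Polynomial.eval_one, hcl, mul_pow]
  rw [heval]
  unfold trm
  simp only
  rw [show (2 * lam / 3 : ℂ) = c from rfl, hprod, ← pow_mul]
  have : c ^ (∑ j ∈ Finset.Icc 1 n, j) * c ^ (l * n) = c ^ E := by rw [← pow_add]
  calc (3:ℂ) ^ (-(4 * (n:ℤ) ^ 3)) *
        (c ^ (∑ j ∈ Finset.Icc 1 n, j) * ∏ j ∈ Finset.Icc 1 n, (c ^ (l - j) - 1)) *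
        lam ^ (-((n:ℤ) ^ 2)) * c ^ (l * n)
      = (3:ℂ) ^ (-(4 * (n:ℤ) ^ 3)) * c ^ E *
        (lam ^ (-((n:ℤ) ^ 2)) * ∏ j ∈ Finset.Icc 1 n, (c ^ (l - j) - 1)) := by
        rw [← this]; ring
    _ = (3:ℂ) ^ (-(4 * (n:ℤ) ^ 3)) * ((2/3) ^ E * lam ^ E) *
        (lam ^ (-((n:ℤ) ^ 2)) * ∏ j ∈ Finset.Icc 1 n, (c ^ (l - j) - 1)) := by
        rw [hcl, mul_pow]
    _ = (3:ℂ) ^ (-(4 * (n:ℤ) ^ 3)) * (2/3) ^ E * lam ^ (E - n ^ 2) *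
        ∏ j ∈ Finset.Icc 1 n, (c ^ (l - j) - 1) := by
        rw [← hlampow]; ring


/-- **Example 1, construction.** The series defining `f` converges normally on compact
subsets of `ℂ* × ℂ`, so `f` is holomorphic on the ring domain `ℂ* × ℂ`; moreover, for
every integer `l ≥ 2`, substituting `z = (2λ/3)^l` makes the series a finite sum of
polynomials; in particular `f` extends holomorphically along every curve
`C_l = {z = (2λ/3)^l}`. -/
theorem example1_construction :
    (∀ K : Set (ℂ × ℂ), IsCompact K → K ⊆ {p : ℂ × ℂ | p.1 ≠ 0} →
      ∃ u : ℕ → ℝ, Summable u ∧ ∀ n : ℕ, ∀ p ∈ K, ‖trm (n + 1) p‖ ≤ u n) ∧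
    DifferentiableOn ℂ fEx {p : ℂ × ℂ | p.1 ≠ 0} ∧
    ∀ l : ℕ, 2 ≤ l →
      (∀ lam : ℂ, lam ≠ 0 →
        fEx (lam, (2 * lam / 3) ^ l) =
          ∑ n ∈ Finset.Icc 1 (l - 1), trm n (lam, (2 * lam / 3) ^ l)) ∧
      ∃ P : Polynomial ℂ, ∀ lam : ℂ, lam ≠ 0 →
        fEx (lam, (2 * lam / 3) ^ l) = P.eval lam := by
  refine ⟨part1, fun p hp => (fEx_diffAt hp).differentiableWithinAt, fun l hl => ?_⟩
  refine ⟨fun lam _ => finite_sum hl lam, ?_⟩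
  refine ⟨∑ n ∈ Finset.Icc 1 (l - 1),
    (Polynomial.C ((3:ℂ) ^ (-(4 * (n:ℤ) ^ 3)) *
        (2/3) ^ ((∑ j ∈ Finset.Icc 1 n, j) + l * n)) *
      Polynomial.X ^ (((∑ j ∈ Finset.Icc 1 n, j) + l * n) - n ^ 2) *
      ∏ j ∈ Finset.Icc 1 n,
        (Polynomial.C ((2/3 : ℂ) ^ (l - j)) * Polynomial.X ^ (l - j) - 1)),
    fun lam hlam => ?_⟩
  rw [finite_sum hl lam, Polynomial.eval_finset_sum]
  refine Finset.sum_congr rfl fun n hn => ?_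
  obtain ⟨h1, h2⟩ := Finset.mem_Icc.1 hn
  exact trm_poly h1 h2 hl hlam

end
end

section
/- Define the map ℱ: l² → l² ⊕ l² by ℱ({z_k}_{k=1}^∞) = ({z_k(z_k − 1/k)}_{k≥1}, {z_k z_j}_{j>k≥1}). Then ℱ is a holomorphic map between these complex Hilbert spaces, and its zero set is exactly the sequence of points {Z_k}_{k≥1} together with 0, where Z_k = (0,…,0,1/k,0,…) has 1/k in the k-th coordinate and 0 elsewhere. In particular, the zero set of a holomorphic map on an infinite-dimensional Hilbert space can be a convergent sequence of isolated points together with its (non-isolated) limit point, containing no analytic disk. -/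
open Metric Filter Set

set_option maxHeartbeats 1000000

noncomputable section

/-- The index type of the second factor of `l² ⊕ l²`: the pairs `(k, j)` with `j > k`. -/
def PairIdx : Type := {q : ℕ × ℕ // q.1 < q.2}

namespace CoeureAux

abbrev E := lp (fun _ : ℕ => ℂ) 2
abbrev G := lp (fun _ : ℕ ⊕ PairIdx => ℂ) 2

/-- The index embedding into `ℕ × ℕ`. -/
def idx : ℕ ⊕ PairIdx → ℕ × ℕ := Sum.elim (fun k => (k, k)) (fun q => q.1)

lemma idx_inj : Function.Injective idx := by
  rintro (k | q) (k' | q') h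
  · simp only [idx, Sum.elim_inl, Prod.mk.injEq] at h
    exact congrArg Sum.inl h.1
  · exfalso
    simp only [idx, Sum.elim_inl, Sum.elim_inr] at h
    have := q'.2
    rw [← h] at this
    exact lt_irrefl _ this
  · exfalso
    simp only [idx, Sum.elim_inl, Sum.elim_inr] at h
    have := q.2
    rw [h] at this
    exact lt_irrefl _ this
  · simp only [idx, Sum.elim_inr] at h
    exact congrArg Sum.inr (Subtype.ext h)

lemma two_toReal : ((2 : ENNReal).toReal) = ((2 : ℕ) : ℝ) := by norm_num

lemma sq_summable {α : Type*} (x : lp (fun _ : α => ℂ) 2) :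
    Summable fun k => ‖x k‖ ^ 2 := by
  have := (lp.memℓp x).summable (p := 2) (by norm_num)
  simpa only [two_toReal, Real.rpow_natCast] using this

lemma norm_sq_eq {α : Type*} (x : lp (fun _ : α => ℂ) 2) :
    ‖x‖ ^ 2 = ∑' k, ‖x k‖ ^ 2 := by
  have := lp.norm_rpow_eq_tsum (p := 2) (by norm_num) x
  simpa only [two_toReal, Real.rpow_natCast] using this

lemma prod_summable (x y : E) :
    Summable fun p : ℕ × ℕ => ‖x p.1‖ ^ 2 * ‖y p.2‖ ^ 2 :=
  Summable.mul_of_nonneg (sq_summable x) (sq_summable y)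
    (Pi.le_def.mpr fun _ => sq_nonneg _) (Pi.le_def.mpr fun _ => sq_nonneg _)

lemma memB (x y : E) : Memℓp (fun i => x (idx i).1 * y (idx i).2) 2 := by
  apply memℓp_gen
  refine ((prod_summable x y).comp_injective idx_inj).congr fun i => ?_
  simp only [Function.comp_apply, norm_mul, mul_pow, two_toReal, Real.rpow_natCast]

/-- The bilinear part as an element of `G`. -/
def bEl (x y : E) : G := ⟨fun i => x (idx i).1 * y (idx i).2, memB x y⟩

@[simp] lemma bEl_apply (x y : E) (i : ℕ ⊕ PairIdx) :
    bEl x y i = x (idx i).1 * y (idx i).2 := rfl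

lemma norm_bEl_le (x y : E) : ‖bEl x y‖ ≤ ‖x‖ * ‖y‖ := by
  apply lp.norm_le_of_tsum_le (by norm_num) (mul_nonneg (norm_nonneg _) (norm_nonneg _))
  simp only [two_toReal, Real.rpow_natCast]
  calc ∑' i, ‖bEl x y i‖ ^ 2
      ≤ ∑' p : ℕ × ℕ, ‖x p.1‖ ^ 2 * ‖y p.2‖ ^ 2 := by
        refine Summable.tsum_le_tsum_of_inj idx idx_inj (fun p _ => mul_nonneg (sq_nonneg _) (sq_nonneg _))
          (fun i => ?_) (((prod_summable x y).comp_injective idx_inj).congr fun i => by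
            simp [norm_mul, mul_pow]) (prod_summable x y)
        simp [norm_mul, mul_pow]
    _ = (∑' k, ‖x k‖ ^ 2) * (∑' k, ‖y k‖ ^ 2) :=
        (Summable.tsum_mul_tsum (sq_summable x) (sq_summable y) (prod_summable x y)).symm
    _ = (‖x‖ * ‖y‖) ^ 2 := by rw [← norm_sq_eq, ← norm_sq_eq, mul_pow]

/-- The bilinear map `B` as a bilinear map. -/
def Blm : E →ₗ[ℂ] E →ₗ[ℂ] G :=
  LinearMap.mk₂ ℂ bEl
    (fun x x' y => lp.ext (funext fun i => by
      simp [bEl, lp.coeFn_add, Pi.add_apply, add_mul]; rfl))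
    (fun c x y => lp.ext (funext fun i => by
      simp [bEl, lp.coeFn_smul, Pi.smul_apply, smul_eq_mul, mul_assoc]))
    (fun x y y' => lp.ext (funext fun i => by
      simp [bEl, lp.coeFn_add, Pi.add_apply, mul_add]; rfl))
    (fun c x y => lp.ext (funext fun i => by
      simp [bEl, lp.coeFn_smul, Pi.smul_apply, smul_eq_mul]; ring))

/-- The bilinear map `B` as a continuous bilinear map. -/
def B : E →L[ℂ] E →L[ℂ] G :=
  LinearMap.mkContinuous₂ Blm 1 (fun x y => by
    rw [one_mul]; exact norm_bEl_le x y)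

@[simp] lemma B_apply (x y : E) (i : ℕ ⊕ PairIdx) :
    B x y i = x (idx i).1 * y (idx i).2 := rfl

/-- The raw linear part. -/
def lFun (x : E) : (ℕ ⊕ PairIdx) → ℂ := Sum.elim (fun k => x k / ((k : ℂ) + 1)) (fun _ => 0)

lemma lFun_sq_eq (x : E) (i : ℕ ⊕ PairIdx) :
    ‖lFun x i‖ ^ 2 = Function.extend Sum.inl (fun k => ‖x k / ((k : ℂ) + 1)‖ ^ 2) 0 i := by
  cases i with
  | inl k =>
      rw [Function.Injective.extend_apply Sum.inl_injective]
      rfl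
  | inr q =>
      rw [Function.extend_apply' _ _ _ (by rintro ⟨k, hk⟩; cases hk)]
      simp [lFun]

lemma one_le_norm_k1 (k : ℕ) : (1 : ℝ) ≤ ‖((k : ℂ) + 1)‖ := by
  rw [show ((k : ℂ) + 1) = ((k + 1 : ℕ) : ℂ) by push_cast; ring, Complex.norm_natCast]
  exact_mod_cast Nat.one_le_iff_ne_zero.2 (Nat.succ_ne_zero k)

lemma coord_sq_le (x : E) (k : ℕ) : ‖x k / ((k : ℂ) + 1)‖ ^ 2 ≤ ‖x k‖ ^ 2 := by
  rw [norm_div]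
  exact pow_le_pow_left₀ (by positivity)
    (div_le_self (norm_nonneg _) (one_le_norm_k1 k)) 2

lemma lFun_part_summable (x : E) : Summable fun k : ℕ => ‖x k / ((k : ℂ) + 1)‖ ^ 2 :=
  Summable.of_nonneg_of_le (fun k => sq_nonneg _) (fun k => coord_sq_le x k) (sq_summable x)

lemma lFun_summable (x : E) : Summable fun i => ‖lFun x i‖ ^ 2 := by
  refine Summable.congr ?_ (fun i => (lFun_sq_eq x i).symm)
  exact (summable_extend_zero Sum.inl_injective).2 (lFun_part_summable x)

lemma memL (x : E) : Memℓp (lFun x) 2 := by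
  apply memℓp_gen
  simpa only [two_toReal, Real.rpow_natCast] using lFun_summable x

lemma tsum_lFun (x : E) :
    ∑' i, ‖lFun x i‖ ^ 2 = ∑' k : ℕ, ‖x k / ((k : ℂ) + 1)‖ ^ 2 := by
  refine (Function.Injective.tsum_eq Sum.inl_injective ?_).symm
  intro i hi
  rcases i with k | q
  · exact ⟨k, rfl⟩
  · exfalso
    apply hi
    simp [lFun]

/-- The linear part as a linear map. -/
def Llm : E →ₗ[ℂ] G where
  toFun x := ⟨lFun x, memL x⟩
  map_add' x y := lp.ext (funext fun i => by
    show lFun (x + y) i = lFun x i + lFun y i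
    cases i with
    | inl k =>
        show (x + y) k / ((k : ℂ) + 1) = x k / ((k : ℂ) + 1) + y k / ((k : ℂ) + 1)
        rw [show ((x + y) k : ℂ) = x k + y k from rfl]
        ring
    | inr q =>
        show (0 : ℂ) = 0 + 0
        ring)
  map_smul' c x := lp.ext (funext fun i => by
    show lFun (c • x) i = c • lFun x i
    cases i with
    | inl k =>
        show (c • x) k / ((k : ℂ) + 1) = c • (x k / ((k : ℂ) + 1))
        rw [show ((c • x) k : ℂ) = c * x k from rfl]
        simp [smul_eq_mul]
        ring
    | inr q =>
        show (0 : ℂ) = c • (0 : ℂ)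
        simp)

lemma norm_Llm_le (x : E) : ‖Llm x‖ ≤ ‖x‖ := by
  apply lp.norm_le_of_tsum_le (by norm_num) (norm_nonneg _)
  simp only [two_toReal, Real.rpow_natCast]
  have h1 : ∑' i, ‖(Llm x) i‖ ^ 2 = ∑' k : ℕ, ‖x k / ((k : ℂ) + 1)‖ ^ 2 := tsum_lFun x
  rw [h1]
  exact le_trans
    ((lFun_part_summable x).tsum_le_tsum (fun k => coord_sq_le x k) (sq_summable x))
    (le_of_eq (norm_sq_eq x).symm)

/-- The linear part as a continuous linear map. -/
def L : E →L[ℂ] G := Llm.mkContinuous 1 (fun x => by simpa using norm_Llm_le x)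

@[simp] lemma L_apply_inl (x : E) (k : ℕ) : L x (Sum.inl k) = x k / ((k : ℂ) + 1) := rfl
@[simp] lemma L_apply_inr (x : E) (q : PairIdx) : L x (Sum.inr q) = 0 := rfl

/-- The map `F`. -/
def F (x : E) : G := B x x - L x

lemma F_apply_inl (x : E) (k : ℕ) :
    F x (Sum.inl k) = x k * (x k - 1 / ((k : ℂ) + 1)) := by
  have : F x (Sum.inl k) = B x x (Sum.inl k) - L x (Sum.inl k) := by
    rw [F, lp.coeFn_sub]; rfl
  rw [this, B_apply, L_apply_inl]
  show x k * x k - x k / ((k : ℂ) + 1) = _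
  ring

lemma F_apply_inr (x : E) (q : PairIdx) :
    F x (Sum.inr q) = x q.1.1 * x q.1.2 := by
  have : F x (Sum.inr q) = B x x (Sum.inr q) - L x (Sum.inr q) := by
    rw [F, lp.coeFn_sub]; rfl
  rw [this, B_apply, L_apply_inr, sub_zero]
  rfl

lemma F_differentiable : Differentiable ℂ F := by
  have h1 : Differentiable ℂ (fun x : E => B x x) := by
    have := (B.isBoundedBilinearMap).differentiable
    exact this.comp (differentiable_id.prodMk differentiable_id)
  exact h1.sub L.differentiable

lemma nat_succ_ne_zero' (k : ℕ) : ((k : ℂ) + 1) ≠ 0 :=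
  Nat.cast_add_one_ne_zero k

lemma F_zero_iff (x : E) :
    F x = 0 ↔ x = 0 ∨ ∃ k : ℕ, x = lp.single 2 k (1 / ((k : ℂ) + 1)) := by
  constructor
  · intro h
    have hcoe : ∀ i, F x i = 0 := by
      intro i
      have := lp.eq_zero_iff_coeFn_eq_zero.1 h
      exact congrFun this i
    have h1 : ∀ k : ℕ, x k * (x k - 1 / ((k : ℂ) + 1)) = 0 := fun k => by
      rw [← F_apply_inl]; exact hcoe (Sum.inl k)
    have h2 : ∀ k j : ℕ, k < j → x k * x j = 0 := fun k j hkj => by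
      have := hcoe (Sum.inr ⟨(k, j), hkj⟩)
      exact (F_apply_inr x ⟨(k, j), hkj⟩).symm.trans this
    by_cases hx : ∀ k, x k = 0
    · left
      exact lp.eq_zero_iff_coeFn_eq_zero.2 (funext hx)
    · right
      push_neg at hx
      obtain ⟨k, hk⟩ := hx
      refine ⟨k, lp.ext (funext fun j => ?_)⟩
      have hxk : x k = 1 / ((k : ℂ) + 1) := by
        rcases mul_eq_zero.1 (h1 k) with h | h
        · exact absurd h hk
        · exact sub_eq_zero.1 h
      by_cases hj : j = k
      · subst hj
        rw [lp.single_apply_self]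
        exact hxk
      · rw [lp.single_apply_ne 2 k _ hj]
        rcases lt_or_gt_of_ne hj with hlt | hgt
        · have := h2 j k hlt
          rcases mul_eq_zero.1 this with h | h
          · exact h
          · exact absurd h hk
        · have := h2 k j hgt
          rcases mul_eq_zero.1 this with h | h
          · exact absurd h hk
          · exact h
  · rintro (rfl | ⟨k, rfl⟩)
    · rw [F]
      simp
    · apply lp.eq_zero_iff_coeFn_eq_zero.2
      funext i
      rcases i with m | q
      · show F _ (Sum.inl m) = 0
        rw [F_apply_inl]
        by_cases hm : m = k
        · subst hm
          rw [lp.single_apply_self, sub_self, mul_zero]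
        · rw [lp.single_apply_ne 2 k _ hm, zero_mul]
      · show F _ (Sum.inr q) = 0
        rw [F_apply_inr]
        have hne : q.1.1 ≠ q.1.2 := ne_of_lt q.2
        by_cases h1 : q.1.1 = k
        · rw [lp.single_apply_ne 2 k _ (h1 ▸ hne.symm : q.1.2 ≠ k), mul_zero]
        · rw [lp.single_apply_ne 2 k _ h1, zero_mul]

/-- Coordinate evaluation is continuous. -/
lemma eval_continuous (k : ℕ) : Continuous (fun x : E => x k) := by
  have : LipschitzWith 1 (fun x : E => x k) := by
    apply LipschitzWith.of_dist_le_mul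
    intro x y
    rw [NNReal.coe_one, one_mul, dist_eq_norm, dist_eq_norm]
    have : x k - y k = (x - y) k := by rw [lp.coeFn_sub]; rfl
    rw [this]
    exact lp.norm_apply_le_norm (by norm_num) (x - y) k
  exact this.continuous

/-- A continuous function on a preconnected set taking at most two values is constant. -/
lemma const_of_two_vals {c : ℂ} (hc : c ≠ 0) {s : Set ℂ} (hs : IsPreconnected s)
    {f : ℂ → ℂ} (hf : ContinuousOn f s) (hv : ∀ t ∈ s, f t = 0 ∨ f t = c) :
    ∀ t ∈ s, ∀ t' ∈ s, f t = f t' := by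
  set r := ‖c‖ / 2 with hr_def
  have hcpos : 0 < ‖c‖ := norm_pos_iff.2 hc
  have hr : 0 < r := by positivity
  have hdisj : Disjoint (ball (0 : ℂ) r) (ball c r) := by
    apply ball_disjoint_ball
    rw [dist_zero_left]
    rw [hr_def]; linarith
  have himg : f '' s ⊆ ball (0 : ℂ) r ∪ ball c r := by
    rintro _ ⟨t, ht, rfl⟩
    rcases hv t ht with h | h
    · exact Or.inl (by rw [h]; exact mem_ball_self hr)
    · exact Or.inr (by rw [h]; exact mem_ball_self hr)
  have hpre : IsPreconnected (f '' s) := hs.image f hf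
  intro t ht t' ht'
  rcases hv t ht with h0 | hcv
  · have hsub : f '' s ⊆ ball (0 : ℂ) r :=
      hpre.subset_left_of_subset_union isOpen_ball isOpen_ball hdisj himg
        ⟨f t, ⟨t, ht, rfl⟩, by rw [h0]; exact mem_ball_self hr⟩
    rcases hv t' ht' with h0' | hcv'
    · rw [h0, h0']
    · exfalso
      have hmem : f t' ∈ ball (0 : ℂ) r := hsub ⟨t', ht', rfl⟩
      rw [hcv', mem_ball, dist_zero_right] at hmem
      rw [hr_def] at hmem
      linarith
  · have hsub : f '' s ⊆ ball c r :=
      hpre.subset_left_of_subset_union isOpen_ball isOpen_ball hdisj.symm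
        (by rwa [union_comm] at himg)
        ⟨f t, ⟨t, ht, rfl⟩, by rw [hcv]; exact mem_ball_self hr⟩
    rcases hv t' ht' with h0' | hcv'
    · exfalso
      have hmem : f t' ∈ ball c r := hsub ⟨t', ht', rfl⟩
      rw [h0', mem_ball, dist_zero_left] at hmem
      rw [hr_def] at hmem
      linarith
    · rw [hcv, hcv']

end CoeureAux

/-- **The example of a holomorphic map on `l²` whose zero set is a convergent sequence of
points.** There is a holomorphic (Fréchet complex-differentiable) map
`ℱ : l² → l² ⊕ l²`, `ℱ({z_k}) = ({z_k(z_k - 1/k)}, {z_k z_j}_{j>k})` (here the sequences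
are indexed by `k ∈ ℕ`, the coordinate `k` playing the role of the index `k+1 ≥ 1`),
whose zero set is exactly the sequence of points `Z_k = (0,…,0,1/k,0,…)`, `k ≥ 1`,
together with `0`; in particular the zero set of a holomorphic map on an
infinite-dimensional Hilbert space can be a convergent sequence of isolated points
together with its non-isolated limit point, and contain no analytic disk. -/
theorem coeure_example :
    ∃ F : lp (fun _ : ℕ => ℂ) 2 → lp (fun _ : ℕ ⊕ PairIdx => ℂ) 2,
      Differentiable ℂ F ∧
      (∀ x : lp (fun _ : ℕ => ℂ) 2,
        (∀ k : ℕ, F x (Sum.inl k) = x k * (x k - 1 / ((k : ℂ) + 1))) ∧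
        (∀ q : PairIdx, F x (Sum.inr q) = x q.1.1 * x q.1.2)) ∧
      (∀ x : lp (fun _ : ℕ => ℂ) 2,
        F x = 0 ↔ x = 0 ∨ ∃ k : ℕ, x = lp.single 2 k (1 / ((k : ℂ) + 1))) ∧
      ¬ ∃ γ : ℂ → lp (fun _ : ℕ => ℂ) 2,
          DifferentiableOn ℂ γ (Metric.ball (0 : ℂ) 1) ∧
          (∃ a ∈ Metric.ball (0 : ℂ) 1, ∃ b ∈ Metric.ball (0 : ℂ) 1, γ a ≠ γ b) ∧
          ∀ a ∈ Metric.ball (0 : ℂ) 1, F (γ a) = 0 := by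
  refine ⟨CoeureAux.F, CoeureAux.F_differentiable,
    fun x => ⟨CoeureAux.F_apply_inl x, CoeureAux.F_apply_inr x⟩, CoeureAux.F_zero_iff, ?_⟩
  rintro ⟨γ, hγd, ⟨a, ha, b, hb, hne⟩, hz⟩
  have hconn : IsPreconnected (Metric.ball (0 : ℂ) 1) := (convex_ball (0 : ℂ) 1).isPreconnected
  have hcont : ContinuousOn γ (Metric.ball (0 : ℂ) 1) := hγd.continuousOn
  apply hne
  apply lp.ext
  funext k
  have hck : ∀ t ∈ Metric.ball (0 : ℂ) 1, γ t k = 0 ∨ γ t k = 1 / ((k : ℂ) + 1) := by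
    intro t ht
    rcases (CoeureAux.F_zero_iff (γ t)).1 (hz t ht) with h0 | ⟨k', hk'⟩
    · left
      rw [h0]
      exact congrFun (lp.coeFn_zero (fun _ : ℕ => ℂ) 2) k
    · rw [hk']
      by_cases h : k = k'
      · subst h
        right
        rw [lp.single_apply_self]
      · left
        exact lp.single_apply_ne 2 k' _ h
  exact CoeureAux.const_of_two_vals (one_div_ne_zero (CoeureAux.nat_succ_ne_zero' k)) hconn
    ((CoeureAux.eval_continuous k).comp_continuousOn hcont) hck a ha b hb

end
end
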